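/- Let Q₁,…,Q_N satisfy ∑ᵢ QᵢᵀQᵢ = I and π > 0. Then T_π := (1/N) ∑ᵢ (QᵢᵀQᵢ + πI)^{-1} is symmetric, and every eigenvalue τ of T_π satisfies τ ≥ N/(1 + πN). -/

import Mathlib

open Matrix BigOperators

lemma sum_mulVec' {N n : ℕ} (M : Fin N → Matrix (Fin n) (Fin n) ℝ) (v : Fin n → ℝ) :
    (∑ i, M i) *ᵥ v = ∑ i, M i *ᵥ v := by
  ext j
  simp only [Matrix.mulVec, dotProduct, Finset.sum_apply, Matrix.sum_apply,
    Finset.sum_mul]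
  rw [Finset.sum_comm]

lemma dotProduct_sum' {N n : ℕ} (v : Fin n → ℝ) (w : Fin N → Fin n → ℝ) :
    v ⬝ᵥ ∑ i, w i = ∑ i, v ⬝ᵥ w i := by
  simp only [dotProduct, Finset.sum_apply, Finset.mul_sum]
  rw [Finset.sum_comm]

/-- For a real positive definite matrix `A`, `(t⬝t)² / (t⬝At) ≤ t⬝A⁻¹t`. -/
lemma key_ineq {n : ℕ} {A : Matrix (Fin n) (Fin n) ℝ} (hA : A.PosDef)
    {t : Fin n → ℝ} (ht : t ≠ 0) :
    (t ⬝ᵥ t) ^ 2 / (t ⬝ᵥ (A *ᵥ t)) ≤ t ⬝ᵥ (A⁻¹ *ᵥ t) := by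
  have hx : (0:ℝ) < t ⬝ᵥ (A *ᵥ t) := by simpa using hA.dotProduct_mulVec_pos ht
  have hAsymm : Aᵀ = A := by
    have := hA.isHermitian; rwa [Matrix.IsHermitian, conjTranspose_eq_transpose_of_trivial] at this
  have hinv : A * A⁻¹ = 1 := Matrix.mul_nonsing_inv A hA.det_pos.ne'.isUnit
  set c : ℝ := (t ⬝ᵥ t) / (t ⬝ᵥ (A *ᵥ t)) with hc
  set u : Fin n → ℝ := A⁻¹ *ᵥ t - c • t with hu
  have h0 : (0:ℝ) ≤ u ⬝ᵥ (A *ᵥ u) := by simpa using hA.posSemidef.dotProduct_mulVec_nonneg u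
  have hAu : A *ᵥ u = t - c • (A *ᵥ t) := by
    rw [hu, mulVec_sub, mulVec_smul, mulVec_mulVec, hinv, one_mulVec]
  have h1 : (A⁻¹ *ᵥ t) ⬝ᵥ t = t ⬝ᵥ (A⁻¹ *ᵥ t) := dotProduct_comm _ _
  have h2 : (A⁻¹ *ᵥ t) ⬝ᵥ (A *ᵥ t) = t ⬝ᵥ t := by
    rw [dotProduct_mulVec, ← mulVec_transpose, hAsymm, mulVec_mulVec, hinv, one_mulVec]
  have h3 : (c • t) ⬝ᵥ t = c * (t ⬝ᵥ t) := smul_dotProduct _ _ _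
  have hexp : u ⬝ᵥ (A *ᵥ u) =
      t ⬝ᵥ (A⁻¹ *ᵥ t) - 2 * c * (t ⬝ᵥ t) + c ^ 2 * (t ⬝ᵥ (A *ᵥ t)) := by
    rw [hAu, hu]
    simp only [sub_dotProduct, dotProduct_sub, smul_dotProduct, dotProduct_smul, h1, h2, h3,
      smul_eq_mul]
    ring
  have hcx : c * (t ⬝ᵥ (A *ᵥ t)) = t ⬝ᵥ t := by
    rw [hc, div_mul_cancel₀ _ hx.ne']
  have hc2 : c ^ 2 * (t ⬝ᵥ (A *ᵥ t)) = c * (t ⬝ᵥ t) := by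
    rw [sq, mul_assoc, hcx]
  have hmain : c * (t ⬝ᵥ t) ≤ t ⬝ᵥ (A⁻¹ *ᵥ t) := by linarith [h0, hexp.symm.le, hexp.le]
  calc (t ⬝ᵥ t) ^ 2 / (t ⬝ᵥ (A *ᵥ t)) = c * (t ⬝ᵥ t) := by rw [hc]; ring
    _ ≤ _ := hmain

theorem stmt4 {N n : ℕ} (hN : 2 ≤ N) {m : Fin N → ℕ}
    (Q : ∀ i, Matrix (Fin (m i)) (Fin n) ℝ)
    (hQ : ∑ i, (Q i)ᵀ * Q i = 1)
    (p : ℝ) (hp : 0 < p)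
    (T : Matrix (Fin n) (Fin n) ℝ)
    (hT : T = (N : ℝ)⁻¹ •
      ∑ i, ((Q i)ᵀ * Q i + p • (1 : Matrix (Fin n) (Fin n) ℝ))⁻¹) :
    T.IsHermitian ∧
      ∀ (τ : ℝ) (t : Fin n → ℝ), t ≠ 0 → T *ᵥ t = τ • t →
        (N : ℝ) / (1 + p * N) ≤ τ := by
  set A : Fin N → Matrix (Fin n) (Fin n) ℝ :=
    fun i => (Q i)ᵀ * Q i + p • (1 : Matrix (Fin n) (Fin n) ℝ) with hA
  have hQQ : ∀ i, ((Q i)ᵀ * Q i).PosSemidef := by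
    intro i
    have := Matrix.posSemidef_conjTranspose_mul_self (Q i)
    rwa [conjTranspose_eq_transpose_of_trivial] at this
  have hp1 : (p • (1 : Matrix (Fin n) (Fin n) ℝ)).PosDef := by
    rw [Matrix.smul_one_eq_diagonal]
    exact .diagonal fun _ => hp
  have hApd : ∀ i, (A i).PosDef := fun i => Matrix.PosDef.posSemidef_add (hQQ i) hp1
  constructor
  · rw [hT, Matrix.IsHermitian, conjTranspose_smul, conjTranspose_sum, star_trivial]
    congr 1
    exact Finset.sum_congr rfl fun i _ => (hApd i).inv.isHermitian
  · intro τ t ht htv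
    have hs : (0:ℝ) < t ⬝ᵥ t := by
      have := dotProduct_star_self_pos_iff (v := t) |>.mpr ht
      simpa using this
    set s : ℝ := t ⬝ᵥ t with hsdef
    set x : Fin N → ℝ := fun i => t ⬝ᵥ (A i *ᵥ t) with hxdef
    have hxpos : ∀ i, 0 < x i := fun i => by simpa using (hApd i).dotProduct_mulVec_pos ht
    have hNpos : (0:ℝ) < N := by positivity
    have hdenom : (0:ℝ) < 1 + p * N := by positivity
    have hxsum : ∑ i, x i = (1 + p * N) * s := by
      have h : ∑ i, x i = t ⬝ᵥ ((∑ i, A i) *ᵥ t) := by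
        rw [sum_mulVec', dotProduct_sum']
      rw [h, hA]
      have hsumA : ∑ i, ((Q i)ᵀ * Q i + p • (1 : Matrix (Fin n) (Fin n) ℝ))
          = (1 : Matrix (Fin n) (Fin n) ℝ) + ((N : ℝ) * p) • 1 := by
        rw [Finset.sum_add_distrib, hQ, Finset.sum_const, Finset.card_univ, Fintype.card_fin,
          ← Nat.cast_smul_eq_nsmul ℝ, smul_smul]
      rw [hsumA, add_mulVec, dotProduct_add, one_mulVec, smul_mulVec, one_mulVec,
        dotProduct_smul]
      simp only [smul_eq_mul, hsdef]
      ring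
    have hTt : t ⬝ᵥ (T *ᵥ t) = τ * s := by
      rw [htv, dotProduct_smul]; simp [hsdef, smul_eq_mul]
    have hTsum : t ⬝ᵥ (T *ᵥ t) = (N : ℝ)⁻¹ * ∑ i, t ⬝ᵥ ((A i)⁻¹ *ᵥ t) := by
      rw [hT, smul_mulVec, dotProduct_smul, smul_eq_mul, sum_mulVec', dotProduct_sum']
    have hCS : (∑ _i : Fin N, (s : ℝ)) ^ 2 / (∑ i, x i) ≤ ∑ i, s ^ 2 / x i :=
      Finset.sq_sum_div_le_sum_sq_div _ _ (fun i _ => hxpos i)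
    have hkey : ∀ i, s ^ 2 / x i ≤ t ⬝ᵥ ((A i)⁻¹ *ᵥ t) := fun i => key_ineq (hApd i) ht
    have hlower : ((N : ℝ) * s) ^ 2 / ((1 + p * N) * s) ≤ ∑ i, t ⬝ᵥ ((A i)⁻¹ *ᵥ t) := by
      calc ((N : ℝ) * s) ^ 2 / ((1 + p * N) * s)
          = (∑ _i : Fin N, (s : ℝ)) ^ 2 / (∑ i, x i) := by
            rw [Finset.sum_const, Finset.card_univ, Fintype.card_fin, nsmul_eq_mul, hxsum]
        _ ≤ ∑ i, s ^ 2 / x i := hCS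
        _ ≤ _ := Finset.sum_le_sum fun i _ => hkey i
    have hτ : (N : ℝ)⁻¹ * (((N : ℝ) * s) ^ 2 / ((1 + p * N) * s)) ≤ τ * s := by
      rw [← hTt, hTsum]
      exact mul_le_mul_of_nonneg_left hlower (by positivity)
    have heq : (N : ℝ)⁻¹ * (((N : ℝ) * s) ^ 2 / ((1 + p * N) * s))
        = (N : ℝ) / (1 + p * N) * s := by
      field_simp
    have : (N : ℝ) / (1 + p * N) * s ≤ τ * s := heq ▸ hτ
    exact le_of_mul_le_mul_right this hs
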